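/- The complete graph K_{2n+1} can be decomposed into 2n+1 pairwise edge-disjoint maximal matchings, each of which covers all but exactly one vertex of K_{2n+1} (i.e., each matching has exactly n edges). -/

import Mathlib

open SimpleGraph
open Fin.CommRing Fin.NatCast

private lemma fin_add_eq_zero_aux {m : ℕ} [NeZero m] (a b : Fin m)
    (h : a + b = 0) : a.val + b.val = 0 ∨ a.val + b.val = m := by
  have hv : (a.val + b.val) % m = 0 := by
    have := congrArg Fin.val h
    simpa [Fin.val_add] using this
  have ha := a.isLt
  have hb := b.isLt
  rcases Nat.lt_or_ge (a.val + b.val) m with hlt | hge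
  · left; rwa [Nat.mod_eq_of_lt hlt] at hv
  · right
    have h2 : a.val + b.val - m < m := by omega
    have : (a.val + b.val) % m = (a.val + b.val - m) % m := by
      conv_lhs => rw [show a.val + b.val = (a.val + b.val - m) + m by omega]
      simp [Nat.add_mod_right]
    rw [this, Nat.mod_eq_of_lt h2] at hv
    omega

/-- The complete graph `K_{2n+1}` decomposes into `2n+1` pairwise edge-disjoint
matchings, each with exactly `n` edges (hence each covers all but one vertex).
The decomposition is encoded by a function `c` assigning to each edge of
`K_{2n+1}` one of `2n+1` classes; each class is a matching with `n` edges. -/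
theorem completeGraph_odd_matching_decomposition (n : ℕ) :
    ∃ c : Sym2 (Fin (2 * n + 1)) → Fin (2 * n + 1),
      ∀ i : Fin (2 * n + 1),
        ({e | e ∈ (⊤ : SimpleGraph (Fin (2 * n + 1))).edgeSet ∧ c e = i} :
            Set (Sym2 (Fin (2 * n + 1)))).ncard = n ∧
        ∀ e₁ ∈ (⊤ : SimpleGraph (Fin (2 * n + 1))).edgeSet,
          ∀ e₂ ∈ (⊤ : SimpleGraph (Fin (2 * n + 1))).edgeSet,
            c e₁ = i → c e₂ = i → e₁ ≠ e₂ →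
              ∀ v : Fin (2 * n + 1), ¬ (v ∈ e₁ ∧ v ∈ e₂) := by
  refine ⟨Sym2.lift ⟨fun a b => a + b, fun a b => add_comm a b⟩, fun i => ?_⟩
  constructor
  · -- cardinality
    set h : Fin (2 * n + 1) := ((n + 1 : ℕ) : Fin (2 * n + 1)) * i with hh
    have h2 : h + h = i := by
      have hcast : ((n + 1 : ℕ) : Fin (2 * n + 1)) + ((n + 1 : ℕ) : Fin (2 * n + 1))
          = 1 := by
        rw [← Nat.cast_add, show (n + 1) + (n + 1) = (2 * n + 1) + 1 by omega,
          Nat.cast_add, Fin.natCast_self, Nat.cast_one, zero_add]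
      calc h + h = (((n + 1 : ℕ) : Fin (2 * n + 1)) + ((n + 1 : ℕ) : Fin (2 * n + 1))) * i := by
            rw [hh]; ring
        _ = 1 * i := by rw [hcast]
        _ = i := one_mul i
    set f : Fin n → Sym2 (Fin (2 * n + 1)) :=
      fun j => s(h + ((j.val + 1 : ℕ) : Fin (2 * n + 1)),
                 h - ((j.val + 1 : ℕ) : Fin (2 * n + 1))) with hf
    have hvalx : ∀ j : Fin n, (((j.val + 1 : ℕ) : Fin (2 * n + 1))).val = j.val + 1 := by
      intro j
      exact Fin.val_cast_of_lt (by omega)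
    have hinj : Function.Injective f := by
      intro j₁ j₂ hj
      set x₁ : Fin (2 * n + 1) := ((j₁.val + 1 : ℕ) : Fin (2 * n + 1))
      set x₂ : Fin (2 * n + 1) := ((j₂.val + 1 : ℕ) : Fin (2 * n + 1))
      have hx₁ := hvalx j₁
      have hx₂ := hvalx j₂
      rw [hf] at hj
      simp only [Sym2.eq_iff] at hj
      rcases hj with ⟨ha, _⟩ | ⟨ha, _⟩
      · have hxe : x₁ = x₂ := add_left_cancel ha
        apply Fin.ext
        have := congrArg Fin.val hxe
        omega
      · have hx : x₁ + x₂ = 0 := by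
          have : x₁ + x₂ = (h + x₁) - (h - x₂) := by ring
          rw [this, ha, sub_self]
        rcases fin_add_eq_zero_aux x₁ x₂ hx with hc | hc <;>
          · exfalso
            have hj1 := j₁.isLt
            have hj2 := j₂.isLt
            omega
    have hset : {e | e ∈ (⊤ : SimpleGraph (Fin (2 * n + 1))).edgeSet ∧
        Sym2.lift ⟨fun a b => a + b, fun a b => add_comm a b⟩ e = i} = Set.range f := by
      ext e
      induction e using Sym2.ind with
      | _ a b =>
        simp only [Set.mem_setOf_eq, SimpleGraph.mem_edgeSet, SimpleGraph.top_adj,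
          Sym2.lift_mk, Set.mem_range]
        constructor
        · rintro ⟨hab, hsum⟩
          set k : Fin (2 * n + 1) := a - h with hk
          have hak : a = h + k := by rw [hk]; ring
          have hbk : b = h - k := by
            have hbi : b = i - a := by rw [← hsum]; ring
            rw [hbi, ← h2, hak]; ring
          have hk0 : k ≠ 0 := by
            intro h0
            apply hab
            rw [hak, hbk, h0]; ring
          have hkval : 1 ≤ k.val := by
            rcases Nat.eq_zero_or_pos k.val with h0 | h0
            · exact absurd (Fin.ext h0) hk0
            · omega
          rcases Nat.lt_or_ge n k.val with hgt | hle
          · -- use -k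
            have hnk : k + (-k) = 0 := by ring
            have hkl := k.isLt
            have hnkl := (-k).isLt
            have hval : (-k).val = (2 * n + 1) - k.val := by
              rcases fin_add_eq_zero_aux k (-k) hnk with hc | hc <;> omega
            refine ⟨⟨(-k).val - 1, by omega⟩, ?_⟩
            rw [hf]
            simp only
            rw [show ((-k).val - 1 + 1 : ℕ) = (-k).val by omega, Fin.cast_val_eq_self]
            rw [show h + -k = h - k by ring, show h - -k = h + k by ring,
              ← hak, ← hbk, Sym2.eq_swap]
          · refine ⟨⟨k.val - 1, by omega⟩, ?_⟩
            rw [hf]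
            simp only
            rw [show (k.val - 1 + 1 : ℕ) = k.val by omega, Fin.cast_val_eq_self,
              ← hak, ← hbk]
        · rintro ⟨j, hj⟩
          rw [hf] at hj
          simp only at hj
          set x : Fin (2 * n + 1) := ((j.val + 1 : ℕ) : Fin (2 * n + 1)) with hx
          have hxv := hvalx j
          have hne : h + x ≠ h - x := by
            intro hcon
            have hxx : x + x = 0 := by
              have : x + x = (h + x) - (h - x) := by ring
              rw [this, hcon, sub_self]
            rcases fin_add_eq_zero_aux x x hxx with hc | hc <;>
              · have hjl := j.isLt
                omega
          rw [Sym2.eq_iff] at hj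
          rcases hj with ⟨ha, hb⟩ | ⟨ha, hb⟩
          · refine ⟨by rw [← ha, ← hb]; exact hne, ?_⟩
            rw [← ha, ← hb, ← h2]; ring
          · refine ⟨by rw [← ha, ← hb]; exact hne.symm, ?_⟩
            rw [← ha, ← hb, ← h2]; ring
    rw [hset, ← Set.image_univ, Set.ncard_image_of_injective _ hinj,
      Set.ncard_univ, Nat.card_eq_fintype_card, Fintype.card_fin]
  · -- matching property
    intro e₁ _ e₂ _ hc₁ hc₂ hne v ⟨hv₁, hv₂⟩
    obtain ⟨w₁, rfl⟩ := Sym2.mem_iff_exists.mp hv₁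
    obtain ⟨w₂, rfl⟩ := Sym2.mem_iff_exists.mp hv₂
    simp only [Sym2.lift_mk] at hc₁ hc₂
    apply hne
    rw [add_left_cancel (hc₁.trans hc₂.symm)]
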